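/- Let V be a finite-dimensional complex vector space with a nondegenerate symmetric bilinear form ω, and suppose dim V ≤ 4. If a linear map A : ℂᵏ → V is not ample with respect to ω and v ∈ V is nonzero, then there exists a linear functional f : ℂᵏ → ℂ such that the linear map x ↦ A(x) + f(x) • v is ample with respect to ω. -/

import Mathlib

open Submodule Module Set

set_option linter.unusedSectionVars false
set_option linter.unnecessarySeqFocus false
set_option maxHeartbeats 1000000

/-- A linear map `A : E → W` is ample with respect to a bilinear form `β` on `W` if the
restriction of `β` to the range of `A` is either identically zero or nondegenerate. -/
def IsAmple {E W : Type*} [AddCommGroup E] [Module ℂ E] [AddCommGroup W] [Module ℂ W]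
    (β : W →ₗ[ℂ] W →ₗ[ℂ] ℂ) (A : E →ₗ[ℂ] W) : Prop :=
  (∀ w ∈ LinearMap.range A, ∀ w' ∈ LinearMap.range A, β w w' = 0) ∨
  (∀ w ∈ LinearMap.range A, w ≠ 0 → ∃ w' ∈ LinearMap.range A, β w w' ≠ 0)

section Helpers

variable {V : Type*} [AddCommGroup V] [Module ℂ V] [FiniteDimensional ℂ V]

/-- Extend prescribed values on a linearly independent family to a functional. -/
lemma exists_dual_family {m : ℕ} (w : Fin m → V) (hw : LinearIndependent ℂ w)
    (c : Fin m → ℂ) : ∃ ℓ : V →ₗ[ℂ] ℂ, ∀ i, ℓ (w i) = c i := by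
  set p := span ℂ (Set.range w) with hp
  obtain ⟨q, hq⟩ := Submodule.exists_isCompl p
  let B := Basis.span hw
  refine ⟨(B.constr ℂ c).comp (p.projectionOnto q hq), fun i => ?_⟩
  have hmem : w i ∈ p := subset_span ⟨i, rfl⟩
  have h1 : (p.projectionOnto q hq) (w i) = ⟨w i, hmem⟩ := by
    have := Submodule.linearProjOfIsCompl_apply_left hq ⟨w i, hmem⟩
    simpa using this
  have h2 : (⟨w i, hmem⟩ : p) = B i := by
    ext; simp [B, Basis.span_apply]
  simp [LinearMap.comp_apply, h1, h2, Basis.constr_basis]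

lemma gram_nondeg {m : ℕ} (ω : V →ₗ[ℂ] V →ₗ[ℂ] ℂ) (w : Fin m → V)
    (G : Matrix (Fin m) (Fin m) ℂ) (hG : ∀ i j, ω (w i) (w j) = G i j)
    (hdet : G.det ≠ 0) :
    ∀ u ∈ span ℂ (Set.range w), u ≠ 0 → ∃ u' ∈ span ℂ (Set.range w), ω u u' ≠ 0 := by
  intro u hu hu0
  by_contra h
  push_neg at h
  obtain ⟨a, ha⟩ := (mem_span_range_iff_exists_fun ℂ).mp hu
  have hvec : Matrix.vecMul a G = 0 := by
    funext j
    have hwj : w j ∈ span ℂ (Set.range w) := subset_span ⟨j, rfl⟩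
    have := h (w j) hwj
    rw [← ha] at this
    simpa [Matrix.vecMul, dotProduct, hG] using this
  have ha0 : a = 0 := by
    have hG' : IsUnit G.det := isUnit_iff_ne_zero.mpr hdet
    have := congrArg (fun x => Matrix.vecMul x G⁻¹) hvec
    simpa [Matrix.vecMul_vecMul, Matrix.mul_nonsing_inv G hG'] using this
  apply hu0
  rw [← ha, ha0]
  simp

lemma gram_zero {m : ℕ} (ω : V →ₗ[ℂ] V →ₗ[ℂ] ℂ) (w : Fin m → V)
    (h : ∀ i j, ω (w i) (w j) = 0) :
    ∀ u ∈ span ℂ (Set.range w), ∀ u' ∈ span ℂ (Set.range w), ω u u' = 0 := by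
  intro u hu u' hu'
  obtain ⟨a, ha⟩ := (mem_span_range_iff_exists_fun ℂ).mp hu
  obtain ⟨b, hb⟩ := (mem_span_range_iff_exists_fun ℂ).mp hu'
  rw [← ha, ← hb]
  simp [map_sum, Finset.mul_sum, h]

lemma span_cons_zero {m : ℕ} (u : Fin m → V) :
    span ℂ (Set.range (Matrix.vecCons (0:V) u)) = span ℂ (Set.range u) := by
  rw [Matrix.range_cons]
  simp [Submodule.span_union]

lemma orth_finrank (ω : V →ₗ[ℂ] V →ₗ[ℂ] ℂ)
    (hsymm : ∀ x y : V, ω x y = ω y x)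
    (hnd : ∀ x : V, (∀ y : V, ω x y = 0) → x = 0)
    (W : Submodule ℂ V) :
    finrank ℂ (LinearMap.BilinForm.orthogonal ω W) = finrank ℂ V - finrank ℂ W := by
  have hrefl : LinearMap.BilinForm.IsRefl ω := fun x y h => by rw [hsymm]; exact h
  exact LinearMap.BilinForm.finrank_orthogonal ⟨hnd, fun y hy => hnd y (fun x => by rw [hsymm]; exact hy x)⟩ W

lemma not_orth_big (ω : V →ₗ[ℂ] V →ₗ[ℂ] ℂ)
    (hsymm : ∀ x y : V, ω x y = ω y x)
    (hnd : ∀ x : V, (∀ y : V, ω x y = 0) → x = 0)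
    (hdim : Module.finrank ℂ V ≤ 4)
    {u1 u2 : V} (h12 : LinearIndependent ℂ ![u1, u2])
    {w : Fin 3 → V} (hw : LinearIndependent ℂ w)
    (horth : ∀ i, ω u1 (w i) = 0 ∧ ω u2 (w i) = 0) : False := by
  set W : Submodule ℂ V := span ℂ (Set.range ![u1, u2]) with hW
  have hWrank : finrank ℂ W = 2 := by
    have := finrank_span_eq_card h12
    simpa using this
  have hle : span ℂ (Set.range w) ≤ LinearMap.BilinForm.orthogonal ω W := by
    rw [Submodule.span_le]
    rintro x ⟨i, rfl⟩
    rw [SetLike.mem_coe, LinearMap.BilinForm.mem_orthogonal_iff]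
    intro z hz
    have hker : W ≤ LinearMap.ker (ω.flip (w i)) := by
      rw [hW, Submodule.span_le]
      rintro y ⟨j, rfl⟩
      fin_cases j <;>
        simp [LinearMap.mem_ker, (horth i).1, (horth i).2]
    have := hker hz
    simpa [LinearMap.BilinForm.IsOrtho, LinearMap.mem_ker] using this
  have h3 : finrank ℂ (span ℂ (Set.range w)) = 3 := by
    have := finrank_span_eq_card hw
    simpa using this
  have hbound := Submodule.finrank_mono hle
  rw [h3, orth_finrank ω hsymm hnd W, hWrank] at hbound
  omega

end Helpers

section Red

variable {V : Type*} [AddCommGroup V] [Module ℂ V]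

/-- the form restricted to a subspace is zero or nondegenerate -/
def GoodSub (ω : V →ₗ[ℂ] V →ₗ[ℂ] ℂ) (U : Submodule ℂ V) : Prop :=
  (∀ w ∈ U, ∀ w' ∈ U, ω w w' = 0) ∨ (∀ w ∈ U, w ≠ 0 → ∃ w' ∈ U, ω w w' ≠ 0)

lemma isAmple_of_goodSub (ω : V →ₗ[ℂ] V →ₗ[ℂ] ℂ) {k : ℕ}
    (A : (Fin k → ℂ) →ₗ[ℂ] V) (v : V) (ℓ : V →ₗ[ℂ] ℂ)
    (h : GoodSub ω (Submodule.map (LinearMap.id + ℓ.smulRight v) (LinearMap.range A))) :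
    IsAmple ω (A + ((ℓ.comp A).smulRight v)) := by
  have hcomp : A + ((ℓ.comp A).smulRight v) = (LinearMap.id + ℓ.smulRight v).comp A := by
    ext x
    simp
  have hrange : LinearMap.range (A + ((ℓ.comp A).smulRight v))
      = Submodule.map (LinearMap.id + ℓ.smulRight v) (LinearMap.range A) := by
    rw [hcomp, LinearMap.range_comp]
  rw [IsAmple, hrange]
  exact h

lemma map_perturb_span {m : ℕ} (v : V) (ℓ : V →ₗ[ℂ] ℂ) (w : Fin m → V) :
    Submodule.map (LinearMap.id + ℓ.smulRight v) (span ℂ (Set.range w))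
      = span ℂ (Set.range (fun i => w i + ℓ (w i) • v)) := by
  rw [Submodule.map_span, ← Set.range_comp]
  rfl

end Red

/-- Proposition 4(B): let `V` carry a nondegenerate symmetric bilinear form `ω` and suppose
`dim V ≤ 4`. If `A : ℂᵏ → V` is not ample and `v ∈ V` is nonzero, then `x ↦ A x + f x • v`
is ample for some linear functional `f : ℂᵏ → ℂ`. -/
theorem not_ample_perturb_vector {V : Type*} [AddCommGroup V] [Module ℂ V]
    [FiniteDimensional ℂ V]
    (ω : V →ₗ[ℂ] V →ₗ[ℂ] ℂ)
    (hsymm : ∀ x y : V, ω x y = ω y x)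
    (hnd : ∀ x : V, (∀ y : V, ω x y = 0) → x = 0)
    (hdim : Module.finrank ℂ V ≤ 4)
    (k : ℕ) (A : (Fin k → ℂ) →ₗ[ℂ] V) (hA : ¬ IsAmple ω A)
    (v : V) (hv : v ≠ 0) :
    ∃ f : (Fin k → ℂ) →ₗ[ℂ] ℂ, IsAmple ω (A + f.smulRight v) := by
  classical
  rw [IsAmple, not_or] at hA
  obtain ⟨h1, h2⟩ := hA
  push_neg at h1 h2
  obtain ⟨w1, hw1, w2, hw2, hww⟩ := h1
  obtain ⟨n, hnR, hn0, hrad⟩ := h2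
  set R := LinearMap.range A with hRdef
  have key : ∀ ℓ : V →ₗ[ℂ] ℂ,
      GoodSub ω (Submodule.map (LinearMap.id + ℓ.smulRight v) R) →
      ∃ f : (Fin k → ℂ) →ₗ[ℂ] ℂ, IsAmple ω (A + f.smulRight v) :=
    fun ℓ h => ⟨ℓ.comp A, isAmple_of_goodSub ω A v ℓ h⟩
  -- find an anisotropic vector e in R
  have hani : ∃ e ∈ R, ω e e ≠ 0 := by
    by_cases h : ω w1 w1 ≠ 0
    · exact ⟨w1, hw1, h⟩
    by_cases h' : ω w2 w2 ≠ 0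
    · exact ⟨w2, hw2, h'⟩
    push_neg at h h'
    refine ⟨w1 + w2, add_mem hw1 hw2, ?_⟩
    have hexp : ω (w1 + w2) (w1 + w2) = 2 * ω w1 w2 := by
      simp only [map_add, LinearMap.add_apply]
      rw [h, h', hsymm w2 w1]
      ring
    rw [hexp]
    exact mul_ne_zero two_ne_zero hww
  obtain ⟨e, heR, hs⟩ := hani
  have hnn : ω n n = 0 := hrad n hnR
  have hne : ω n e = 0 := hrad e heR
  have hen : ω e n = 0 := by rw [hsymm]; exact hne
  have he0 : e ≠ 0 := fun h => hs (by rw [h]; simp)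
  have hli_ne : LinearIndependent ℂ ![n, e] := by
    rw [linearIndependent_fin2]
    refine ⟨by simpa using he0, fun t ht => ?_⟩
    simp only [Matrix.cons_val_zero, Matrix.cons_val_one, Matrix.head_cons] at ht
    have h1 : ω n e = t * ω e e := by rw [← ht, map_smul]; simp [smul_eq_mul]
    rw [hne] at h1
    have ht0 : t = 0 := by
      rcases mul_eq_zero.mp h1.symm with h | h
      · exact h
      · exact absurd h hs
    rw [ht0, zero_smul] at ht
    exact hn0 ht.symm
  -- generic "span equals R" helper
  have span_eq_R : ∀ {mm : ℕ} (w : Fin mm → V), (∀ i, w i ∈ R) →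
      LinearIndependent ℂ w → finrank ℂ R ≤ mm → R = span ℂ (Set.range w) := by
    intro mm w hw hli hrank
    refine (Submodule.eq_of_le_of_finrank_le ?_ ?_).symm
    · rw [Submodule.span_le]
      rintro x ⟨i, rfl⟩
      exact hw i
    · have h2 : finrank ℂ (span ℂ (Set.range w)) = mm := by
        simpa using finrank_span_eq_card hli
      omega
  have hspanne_le : span ℂ (Set.range ![n, e]) ≤ R := by
    rw [Submodule.span_le]
    rintro x ⟨i, rfl⟩
    fin_cases i <;> simpa
  have hfr_ne : finrank ℂ (span ℂ (Set.range ![n, e])) = 2 := by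
    simpa using finrank_span_eq_card hli_ne
  have hRorth : R ≤ LinearMap.BilinForm.orthogonal ω (ℂ ∙ n) := by
    intro x hx
    rw [LinearMap.BilinForm.mem_orthogonal_iff]
    rintro z hz
    obtain ⟨t, rfl⟩ := Submodule.mem_span_singleton.mp hz
    show ω (t • n) x = 0
    rw [map_smul]
    simp [hrad x hx]
  have hr_le : finrank ℂ R ≤ finrank ℂ V - 1 := by
    have := Submodule.finrank_mono hRorth
    rwa [orth_finrank ω hsymm hnd, finrank_span_singleton hn0] at this
  have hr_ge : 2 ≤ finrank ℂ R := by
    have := Submodule.finrank_mono hspanne_le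
    omega
  have hVge : 3 ≤ finrank ℂ V := by
    have := Submodule.finrank_le R
    omega
  have hrcases : finrank ℂ R = 2 ∨ finrank ℂ R = 3 := by omega
  rcases hrcases with hr2 | hr3
  · -- dim R = 2
    have hRspan : R = span ℂ (Set.range ![n, e]) :=
      span_eq_R ![n, e] (by intro i; fin_cases i <;> simpa) hli_ne (by omega)
    by_cases hvR : v ∈ R
    · -- v ∈ R
      obtain ⟨c, hc⟩ := (mem_span_range_iff_exists_fun ℂ).mp (hRspan ▸ hvR)
      have hcv : c 0 • n + c 1 • e = v := by
        rw [← hc, Fin.sum_univ_two]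
        rfl
      by_cases hb : c 1 = 0
      · -- v is a multiple of n; target span{e}
        have hvn : v = c 0 • n := by rw [← hcv, hb]; simp
        have ha : c 0 ≠ 0 := by
          intro h0
          rw [h0, zero_smul] at hvn
          exact hv hvn
        have hev : ω e v = 0 := by rw [hvn, map_smul]; simp [hen]
        have hli : LinearIndependent ℂ ![v, e] := by
          rw [linearIndependent_fin2]
          refine ⟨by simpa using he0, fun t ht => ?_⟩
          simp only [Matrix.cons_val_zero, Matrix.cons_val_one, Matrix.head_cons] at ht
          have h1 : ω e v = t * ω e e := by rw [← ht, map_smul]; simp [smul_eq_mul]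
          rw [hev] at h1
          have ht0 : t = 0 := by
            rcases mul_eq_zero.mp h1.symm with h | h
            · exact h
            · exact absurd h hs
          rw [ht0, zero_smul] at ht
          exact hv ht.symm
        have hvmem : v ∈ R := hvR
        have heq : R = span ℂ (Set.range ![v, e]) :=
          span_eq_R ![v, e] (by intro i; fin_cases i <;> simpa) hli (by omega)
        obtain ⟨ℓ, hℓ⟩ := exists_dual_family ![v, e] hli ![-1, 0]
        have hl0 : ℓ v = -1 := by simpa using hℓ 0
        have hl1 : ℓ e = 0 := by simpa using hℓ 1
        apply key ℓ
        rw [heq, map_perturb_span]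
        have hfam : (fun i => ![v, e] i + ℓ (![v, e] i) • v) = ![(0:V), e] := by
          funext i
          fin_cases i <;> simp [hl0, hl1]
        rw [hfam, show (![(0:V), e]) = Matrix.vecCons (0:V) ![e] from rfl, span_cons_zero]
        refine Or.inr (gram_nondeg ω ![e] !![ω e e] ?_ ?_)
        · intro i j
          fin_cases i <;> fin_cases j <;> simp
        · rw [Matrix.det_fin_one_of]
          exact hs
      · -- c 1 ≠ 0; target span{n} (zero form)
        have hli : LinearIndependent ℂ ![v, n] := by
          rw [linearIndependent_fin2]
          refine ⟨hn0, fun t ht => ?_⟩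
          simp only [Matrix.cons_val_zero, Matrix.cons_val_one, Matrix.head_cons] at ht
          have h1 : ω e v = c 1 * ω e e := by
            rw [← hcv, map_add, map_smul, map_smul]
            simp [smul_eq_mul, hen]
          have h2 : ω e v = 0 := by rw [← ht, map_smul]; simp [smul_eq_mul, hen]
          rw [h2] at h1
          rcases mul_eq_zero.mp h1.symm with h | h
          · exact hb h
          · exact hs h
        have heq : R = span ℂ (Set.range ![v, n]) :=
          span_eq_R ![v, n] (by intro i; fin_cases i <;> simpa) hli (by omega)
        obtain ⟨ℓ, hℓ⟩ := exists_dual_family ![v, n] hli ![-1, 0]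
        have hl0 : ℓ v = -1 := by simpa using hℓ 0
        have hl1 : ℓ n = 0 := by simpa using hℓ 1
        apply key ℓ
        rw [heq, map_perturb_span]
        have hfam : (fun i => ![v, n] i + ℓ (![v, n] i) • v) = ![(0:V), n] := by
          funext i
          fin_cases i <;> simp [hl0, hl1]
        rw [hfam]
        refine Or.inl (gram_zero ω ![(0:V), n] ?_)
        intro i j
        fin_cases i <;> fin_cases j <;> simp [hnn]
    · -- v ∉ R
      by_cases hcrit : ω n v = 0 ∧ ω v v * ω e e = (ω e v) ^ 2
      · -- totally isotropic target
        obtain ⟨hm0, hqs⟩ := hcrit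
        have hvn0 : ω v n = 0 := by rw [hsymm]; exact hm0
        have hp0 : ω e v ≠ 0 := by
          intro hp
          have hq0 : ω v v = 0 := by
            have := hqs
            rw [hp] at this
            simp only [ne_eq, zero_pow, pow_two] at this
            rcases mul_eq_zero.mp (by rw [this]; ring : ω v v * ω e e = 0) with h | h
            · exact h
            · exact absurd h hs
          have hli2 : LinearIndependent ℂ ![n, v] := by
            rw [linearIndependent_fin2]
            refine ⟨hv, fun t ht => ?_⟩
            simp only [Matrix.cons_val_zero, Matrix.cons_val_one, Matrix.head_cons] at ht
            by_cases ht0 : t = 0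
            · rw [ht0, zero_smul] at ht
              exact hn0 ht.symm
            · apply hvR
              have : v = t⁻¹ • n := by
                rw [← ht, smul_smul, inv_mul_cancel₀ ht0, one_smul]
              rw [this]
              exact Submodule.smul_mem R _ hnR
          have hli3 : LinearIndependent ℂ ![v, n, e] :=
            linearIndependent_fin_cons.mpr ⟨hli_ne, by rw [← hRspan]; exact hvR⟩
          have hev' : ω e v = 0 := hp
          have hve : ω v e = 0 := by rw [hsymm]; exact hp
          exact not_orth_big ω hsymm hnd hdim hli2 hli3 (by
            intro i
            fin_cases i <;>
              exact ⟨by simp [hm0, hnn, hne], by simp [hq0, hvn0, hve]⟩)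
        -- construction: ℓ(n)=0, ℓ(e)=λ, image span{n, e + λ v} totally isotropic
        set lam : ℂ := -(ω e e) / (ω e v) with hlam
        obtain ⟨ℓ, hℓ⟩ := exists_dual_family ![n, e] hli_ne ![0, lam]
        have hl0 : ℓ n = 0 := by simpa using hℓ 0
        have hl1 : ℓ e = lam := by simpa using hℓ 1
        apply key ℓ
        rw [hRspan, map_perturb_span]
        have hfam : (fun i => ![n, e] i + ℓ (![n, e] i) • v) = ![n, e + lam • v] := by
          funext i
          fin_cases i <;> simp [hl0, hl1]
        rw [hfam]
        refine Or.inl (gram_zero ω ![n, e + lam • v] ?_)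
        have hkey : ω (e + lam • v) (e + lam • v) = 0 := by
          simp only [map_add, map_smul, LinearMap.add_apply, LinearMap.smul_apply,
            smul_eq_mul]
          rw [hsymm v e]
          rw [hlam]
          field_simp
          linear_combination (ω e e) * hqs
        have h01 : ω n (e + lam • v) = 0 := by
          rw [map_add, map_smul]; simp [hne, hm0]
        have h10 : ω (e + lam • v) n = 0 := by rw [hsymm]; exact h01
        intro i j
        fin_cases i <;> fin_cases j <;>
          simp only [Matrix.cons_val_zero, Matrix.cons_val_one, Matrix.head_cons,
            Fin.isValue] <;>
          first | exact hnn | exact h01 | exact h10 | exact hkey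
      · -- nondegenerate target span{n + c v, e}
        have hαβ : ¬(2 * ω n v * ω e e = 0 ∧ ω v v * ω e e - (ω e v) ^ 2 = 0) := by
          rintro ⟨hα, hβ⟩
          apply hcrit
          constructor
          · rcases mul_eq_zero.mp hα with h | h
            · rcases mul_eq_zero.mp h with h' | h'
              · exact absurd h' two_ne_zero
              · exact h'
            · exact absurd h hs
          · linear_combination hβ
        set α : ℂ := 2 * ω n v * ω e e with hα_def
        set β : ℂ := ω v v * ω e e - (ω e v) ^ 2 with hβ_def
        set c : ℂ := if α + β = 0 then 2 else 1 with hc_def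
        have hc0 : c ≠ 0 := by
          rw [hc_def]
          split <;> norm_num
        have hlin : α + β * c ≠ 0 := by
          rw [hc_def]
          split
          · rename_i h
            intro h2
            have hβ0 : β = 0 := by linear_combination h2 - h
            have hα0 : α = 0 := by linear_combination h - hβ0
            exact hαβ ⟨hα0, hβ0⟩
          · rename_i h
            intro h2
            exact h (by linear_combination h2)
        obtain ⟨ℓ, hℓ⟩ := exists_dual_family ![n, e] hli_ne ![c, 0]
        have hl0 : ℓ n = c := by simpa using hℓ 0
        have hl1 : ℓ e = 0 := by simpa using hℓ 1
        apply key ℓ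
        rw [hRspan, map_perturb_span]
        have hfam : (fun i => ![n, e] i + ℓ (![n, e] i) • v) = ![n + c • v, e] := by
          funext i
          fin_cases i <;> simp [hl0, hl1]
        rw [hfam]
        refine Or.inr (gram_nondeg ω ![n + c • v, e]
          !![2 * c * ω n v + c ^ 2 * ω v v, c * ω e v; c * ω e v, ω e e] ?_ ?_)
        · have g00 : ω (n + c • v) (n + c • v) = 2 * c * ω n v + c ^ 2 * ω v v := by
            simp only [map_add, map_smul, LinearMap.add_apply, LinearMap.smul_apply,
              smul_eq_mul]
            rw [hnn, hsymm v n]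
            ring
          have g01 : ω (n + c • v) e = c * ω e v := by
            simp only [map_add, map_smul, LinearMap.add_apply, LinearMap.smul_apply,
              smul_eq_mul]
            rw [hne, hsymm v e]
            ring
          have g10 : ω e (n + c • v) = c * ω e v := by
            rw [hsymm]
            exact g01
          intro i j
          fin_cases i <;> fin_cases j <;>
            simp only [Matrix.cons_val_zero, Matrix.cons_val_one, Matrix.head_cons,
              Matrix.cons_val', Matrix.head_fin_const, Matrix.cons_val_fin_one,
              Matrix.of_apply, Fin.isValue] <;>
            first | exact g00 | exact g01 | exact g10 | rfl
        · rw [Matrix.det_fin_two_of]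
          have : (2 * c * ω n v + c ^ 2 * ω v v) * ω e e - c * ω e v * (c * ω e v)
              = c * (α + β * c) := by
            rw [hα_def, hβ_def]
            ring
          rw [this]
          exact mul_ne_zero hc0 hlin
  · -- dim R = 3
    have hV4 : finrank ℂ V = 4 := by omega
    have hRorth_eq : R = LinearMap.BilinForm.orthogonal ω (ℂ ∙ n) := by
      refine Submodule.eq_of_le_of_finrank_le hRorth ?_
      rw [orth_finrank ω hsymm hnd, finrank_span_singleton hn0, hV4, hr3]
    have hlt : span ℂ (Set.range ![n, e]) < R := by
      refine lt_of_le_of_ne hspanne_le ?_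
      intro h
      rw [h] at hfr_ne
      omega
    obtain ⟨wex, hwexR, hwexn⟩ := SetLike.exists_of_lt hlt
    set e2 : V := wex - (ω e wex / ω e e) • e with he2_def
    have he2R : e2 ∈ R := sub_mem hwexR (Submodule.smul_mem R _ heR)
    have hee2 : ω e e2 = 0 := by
      rw [he2_def, map_sub, map_smul]
      rw [smul_eq_mul, div_mul_cancel₀ _ hs, sub_self]
    have he2e : ω e2 e = 0 := by rw [hsymm]; exact hee2
    have hne2 : ω n e2 = 0 := hrad e2 he2R
    have he2n : ω e2 n = 0 := by rw [hsymm]; exact hne2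
    have he2_not : e2 ∉ span ℂ (Set.range ![n, e]) := by
      intro hmem
      apply hwexn
      have hwex : wex = e2 + (ω e wex / ω e e) • e := by rw [he2_def]; abel
      rw [hwex]
      exact add_mem hmem (Submodule.smul_mem _ _ (subset_span ⟨1, rfl⟩))
    have he2_0 : e2 ≠ 0 := fun h => he2_not (by rw [h]; exact zero_mem _)
    have hsub3 : ∀ i, ![n, e, e2] i ∈ R := by
      intro i; fin_cases i <;> simpa
    have hspan3_le : span ℂ (Set.range ![n, e, e2]) ≤ R := by
      rw [Submodule.span_le]; rintro x ⟨i, rfl⟩; exact hsub3 i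
    have hlt2 : span ℂ (Set.range ![n, e]) < span ℂ (Set.range ![n, e, e2]) := by
      refine lt_of_le_of_ne ?_ ?_
      · apply Submodule.span_mono
        rintro x ⟨i, rfl⟩
        fin_cases i
        · exact ⟨0, rfl⟩
        · exact ⟨1, rfl⟩
      · intro h
        exact he2_not (h ▸ subset_span ⟨2, rfl⟩)
    have hfrank3 : finrank ℂ (span ℂ (Set.range ![n, e, e2])) = 3 := by
      have hlow := finrank_lt_finrank_of_lt hlt2
      have hup := Submodule.finrank_mono hspan3_le
      omega
    have hspan3 : R = span ℂ (Set.range ![n, e, e2]) :=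
      (Submodule.eq_of_le_of_finrank_le hspan3_le (by omega)).symm
    have hli3 : LinearIndependent ℂ ![n, e, e2] := by
      rw [linearIndependent_iff_card_eq_finrank_span]
      simpa [Set.finrank] using hfrank3.symm
    have hs2 : ω e2 e2 ≠ 0 := by
      intro h0
      have hline2 : LinearIndependent ℂ ![n, e2] := by
        rw [linearIndependent_fin2]
        refine ⟨he2_0, fun t ht => ?_⟩
        simp only [Matrix.cons_val_zero, Matrix.cons_val_one, Matrix.head_cons] at ht
        by_cases ht0 : t = 0
        · rw [ht0, zero_smul] at ht
          exact hn0 ht.symm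
        · apply he2_not
          have he2n' : e2 = t⁻¹ • n := by
            rw [← ht, smul_smul, inv_mul_cancel₀ ht0, one_smul]
          rw [he2n']
          exact Submodule.smul_mem _ _ (subset_span ⟨0, rfl⟩)
      exact not_orth_big ω hsymm hnd hdim hline2 hli3 (by
        intro i
        fin_cases i <;> exact ⟨by simp [hnn, hne, hne2], by simp [he2n, he2e, h0]⟩)
    by_cases hvR : v ∈ R
    · obtain ⟨c, hc⟩ := (mem_span_range_iff_exists_fun ℂ).mp (hspan3 ▸ hvR)
      have hcv3 : c 0 • n + c 1 • e + c 2 • e2 = v := by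
        rw [← hc, Fin.sum_univ_three]
        rfl
      have hli_ee2 : LinearIndependent ℂ ![e, e2] := by
        rw [linearIndependent_fin2]
        refine ⟨he2_0, fun t ht => ?_⟩
        simp only [Matrix.cons_val_zero, Matrix.cons_val_one, Matrix.head_cons] at ht
        apply hs
        have h1 : ω e e = t * ω e2 e := by
          nth_rewrite 1 [← ht]
          rw [map_smul]
          simp [smul_eq_mul]
        rw [h1, he2e, mul_zero]
      by_cases hbz : c 1 = 0 ∧ c 2 = 0
      · -- v is a multiple of n
        have hvn : v = c 0 • n := by rw [← hcv3, hbz.1, hbz.2]; simp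
        have hc00 : c 0 ≠ 0 := by
          intro h0
          rw [h0, zero_smul] at hvn
          exact hv hvn
        have hv_not : v ∉ span ℂ (Set.range ![e, e2]) := by
          intro hmem
          have hn_in : n ∈ span ℂ (Set.range ![e, e2]) := by
            have : n = (c 0)⁻¹ • v := by
              rw [hvn, smul_smul, inv_mul_cancel₀ hc00, one_smul]
            rw [this]
            exact Submodule.smul_mem _ _ hmem
          have hle' : span ℂ (Set.range ![n, e, e2]) ≤ span ℂ (Set.range ![e, e2]) := by
            rw [Submodule.span_le]
            rintro x ⟨i, rfl⟩
            fin_cases i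
            · exact hn_in
            · exact subset_span ⟨0, rfl⟩
            · exact subset_span ⟨1, rfl⟩
          have h1 := Submodule.finrank_mono hle'
          have h2 : finrank ℂ (span ℂ (Set.range ![e, e2])) = 2 := by
            simpa using finrank_span_eq_card hli_ee2
          omega
        have hliv : LinearIndependent ℂ ![v, e, e2] :=
          linearIndependent_fin_cons.mpr ⟨hli_ee2, hv_not⟩
        have heq : R = span ℂ (Set.range ![v, e, e2]) :=
          span_eq_R ![v, e, e2] (by intro i; fin_cases i <;> simpa) hliv (by omega)
        obtain ⟨ℓ, hℓ⟩ := exists_dual_family ![v, e, e2] hliv ![-1, 0, 0]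
        have hl0 : ℓ v = -1 := by simpa using hℓ 0
        have hl1 : ℓ e = 0 := by simpa using hℓ 1
        have hl2 : ℓ e2 = 0 := by simpa using hℓ 2
        apply key ℓ
        rw [heq, map_perturb_span]
        have hfam : (fun i => ![v, e, e2] i + ℓ (![v, e, e2] i) • v) = ![(0:V), e, e2] := by
          funext i
          fin_cases i <;> simp [hl0, hl1, hl2]
        rw [hfam, show (![(0:V), e, e2]) = Matrix.vecCons (0:V) ![e, e2] from rfl,
          span_cons_zero]
        refine Or.inr (gram_nondeg ω ![e, e2] !![ω e e, 0; 0, ω e2 e2] ?_ ?_)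
        · intro i j
          fin_cases i <;> fin_cases j <;>
            simp only [Matrix.cons_val_zero, Matrix.cons_val_one, Matrix.head_cons,
              Matrix.cons_val', Matrix.head_fin_const, Matrix.cons_val_fin_one,
              Matrix.of_apply, Fin.isValue] <;>
            first | rfl | exact hee2 | exact he2e
        · rw [Matrix.det_fin_two_of]
          simpa using mul_ne_zero hs hs2
      · -- v has a component along e or e2
        have ha_ex : ∃ a1 a2 : ℂ, c 1 * a1 + c 2 * a2 = c 0 + 1 := by
          by_cases h1 : c 1 = 0
          · have h2 : c 2 ≠ 0 := fun h2 => hbz ⟨h1, h2⟩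
            exact ⟨0, (c 0 + 1) / c 2, by field_simp; ring⟩
          · exact ⟨(c 0 + 1) / c 1, 0, by field_simp; ring⟩
        obtain ⟨a1, a2, hkeyc⟩ := ha_ex
        set u1 : V := e + a1 • n with hu1_def
        set u2 : V := e2 + a2 • n with hu2_def
        have hu1R : u1 ∈ R := add_mem heR (Submodule.smul_mem R _ hnR)
        have hu2R : u2 ∈ R := add_mem he2R (Submodule.smul_mem R _ hnR)
        have hvu : v - c 1 • u1 - c 2 • u2 = (c 0 - (c 1 * a1 + c 2 * a2)) • n := by
          rw [hu1_def, hu2_def, ← hcv3]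
          module
        have hvu' : v - c 1 • u1 - c 2 • u2 = (-1 : ℂ) • n := by
          rw [hvu, hkeyc]
          norm_num
        have hn_mem : n ∈ span ℂ (Set.range ![v, u1, u2]) := by
          have hn_eq : n = -(v - c 1 • u1 - c 2 • u2) := by
            rw [hvu']
            module
          rw [hn_eq]
          refine neg_mem (sub_mem (sub_mem (subset_span ⟨0, rfl⟩) ?_) ?_)
          · exact Submodule.smul_mem _ _ (subset_span ⟨1, rfl⟩)
          · exact Submodule.smul_mem _ _ (subset_span ⟨2, rfl⟩)
        have he_mem : e ∈ span ℂ (Set.range ![v, u1, u2]) := by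
          have : e = u1 - a1 • n := by rw [hu1_def]; module
          rw [this]
          exact sub_mem (subset_span ⟨1, rfl⟩) (Submodule.smul_mem _ _ hn_mem)
        have he2_mem : e2 ∈ span ℂ (Set.range ![v, u1, u2]) := by
          have : e2 = u2 - a2 • n := by rw [hu2_def]; module
          rw [this]
          exact sub_mem (subset_span ⟨2, rfl⟩) (Submodule.smul_mem _ _ hn_mem)
        have heq : R = span ℂ (Set.range ![v, u1, u2]) := by
          apply le_antisymm
          · rw [hspan3, Submodule.span_le]
            rintro x ⟨i, rfl⟩
            fin_cases i
            · exact hn_mem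
            · exact he_mem
            · exact he2_mem
          · rw [Submodule.span_le]
            rintro x ⟨i, rfl⟩
            fin_cases i <;> simpa
        have hliv : LinearIndependent ℂ ![v, u1, u2] := by
          have hfr_u : finrank ℂ (span ℂ (Set.range ![v, u1, u2])) = 3 := by
            rw [← heq]
            exact hr3
          rw [linearIndependent_iff_card_eq_finrank_span]
          simpa [Set.finrank] using hfr_u.symm
        obtain ⟨ℓ, hℓ⟩ := exists_dual_family ![v, u1, u2] hliv ![-1, 0, 0]
        have hl0 : ℓ v = -1 := by simpa using hℓ 0
        have hl1 : ℓ u1 = 0 := by simpa using hℓ 1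
        have hl2 : ℓ u2 = 0 := by simpa using hℓ 2
        apply key ℓ
        rw [heq, map_perturb_span]
        have hfam : (fun i => ![v, u1, u2] i + ℓ (![v, u1, u2] i) • v)
            = ![(0:V), u1, u2] := by
          funext i
          fin_cases i <;> simp [hl0, hl1, hl2]
        rw [hfam, show (![(0:V), u1, u2]) = Matrix.vecCons (0:V) ![u1, u2] from rfl,
          span_cons_zero]
        have g00 : ω u1 u1 = ω e e := by
          rw [hu1_def]
          simp only [map_add, map_smul, LinearMap.add_apply, LinearMap.smul_apply,
            smul_eq_mul]
          rw [hne, hen, hnn]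
          ring
        have g01 : ω u1 u2 = 0 := by
          rw [hu1_def, hu2_def]
          simp only [map_add, map_smul, LinearMap.add_apply, LinearMap.smul_apply,
            smul_eq_mul]
          rw [hee2, hen, hne2, hnn]
          ring
        have g10 : ω u2 u1 = 0 := by rw [hsymm]; exact g01
        have g11 : ω u2 u2 = ω e2 e2 := by
          rw [hu2_def]
          simp only [map_add, map_smul, LinearMap.add_apply, LinearMap.smul_apply,
            smul_eq_mul]
          rw [hne2, he2n, hnn]
          ring
        refine Or.inr (gram_nondeg ω ![u1, u2] !![ω e e, 0; 0, ω e2 e2] ?_ ?_)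
        · intro i j
          fin_cases i <;> fin_cases j <;>
            simp only [Matrix.cons_val_zero, Matrix.cons_val_one, Matrix.head_cons,
              Matrix.cons_val', Matrix.head_fin_const, Matrix.cons_val_fin_one,
              Matrix.of_apply, Fin.isValue] <;>
            first | exact g00 | exact g01 | exact g10 | exact g11
        · rw [Matrix.det_fin_two_of]
          simpa using mul_ne_zero hs hs2
    · -- v ∉ R, here ω n v ≠ 0
      have hm : ω n v ≠ 0 := by
        intro h0
        apply hvR
        rw [hRorth_eq, LinearMap.BilinForm.mem_orthogonal_iff]
        intro z hz
        obtain ⟨t, rfl⟩ := Submodule.mem_span_singleton.mp hz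
        show ω (t • n) v = 0
        rw [map_smul]
        simp [h0]
      set α : ℂ := 2 * ω n v * (ω e e * ω e2 e2) with hα_def
      set β : ℂ := ω v v * (ω e e * ω e2 e2) - (ω e v) ^ 2 * ω e2 e2
          - (ω e2 v) ^ 2 * ω e e with hβ_def
      have hα0 : α ≠ 0 := by
        rw [hα_def]
        exact mul_ne_zero (mul_ne_zero two_ne_zero hm) (mul_ne_zero hs hs2)
      set c : ℂ := if α + β = 0 then 2 else 1 with hc_def
      have hc0 : c ≠ 0 := by
        rw [hc_def]
        split <;> norm_num
      have hlin : α + β * c ≠ 0 := by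
        rw [hc_def]
        split
        · rename_i h
          intro h2
          exact hα0 (by linear_combination 2 * h - h2)
        · rename_i h
          intro h2
          exact h (by linear_combination h2)
      obtain ⟨ℓ, hℓ⟩ := exists_dual_family ![n, e, e2] hli3 ![c, 0, 0]
      have hl0 : ℓ n = c := by simpa using hℓ 0
      have hl1 : ℓ e = 0 := by simpa using hℓ 1
      have hl2 : ℓ e2 = 0 := by simpa using hℓ 2
      apply key ℓ
      rw [hspan3, map_perturb_span]
      have hfam : (fun i => ![n, e, e2] i + ℓ (![n, e, e2] i) • v)
          = ![n + c • v, e, e2] := by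
        funext i
        fin_cases i <;> simp [hl0, hl1, hl2]
      rw [hfam]
      have g00 : ω (n + c • v) (n + c • v) = 2 * c * ω n v + c ^ 2 * ω v v := by
        simp only [map_add, map_smul, LinearMap.add_apply, LinearMap.smul_apply,
          smul_eq_mul]
        rw [hnn, hsymm v n]
        ring
      have g01 : ω (n + c • v) e = c * ω e v := by
        simp only [map_add, map_smul, LinearMap.add_apply, LinearMap.smul_apply,
          smul_eq_mul]
        rw [hne, hsymm v e]
        ring
      have g02 : ω (n + c • v) e2 = c * ω e2 v := by
        simp only [map_add, map_smul, LinearMap.add_apply, LinearMap.smul_apply,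
          smul_eq_mul]
        rw [hne2, hsymm v e2]
        ring
      have g10 : ω e (n + c • v) = c * ω e v := by rw [hsymm]; exact g01
      have g20 : ω e2 (n + c • v) = c * ω e2 v := by rw [hsymm]; exact g02
      refine Or.inr (gram_nondeg ω ![n + c • v, e, e2]
        !![2 * c * ω n v + c ^ 2 * ω v v, c * ω e v, c * ω e2 v;
           c * ω e v, ω e e, 0;
           c * ω e2 v, 0, ω e2 e2] ?_ ?_)
      · intro i j
        fin_cases i <;> fin_cases j <;>
          first
          | exact g00 | exact g01 | exact g02 | exact g10 | exact g20
          | exact hee2 | exact he2e | rfl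
      · have hdet : (!![2 * c * ω n v + c ^ 2 * ω v v, c * ω e v, c * ω e2 v;
           c * ω e v, ω e e, 0;
           c * ω e2 v, 0, ω e2 e2] : Matrix (Fin 3) (Fin 3) ℂ).det = c * (α + β * c) := by
          rw [Matrix.det_fin_three]
          simp only [Matrix.cons_val_zero, Matrix.cons_val_one, Matrix.head_cons,
            Matrix.cons_val', Matrix.head_fin_const, Matrix.cons_val_fin_one,
            Matrix.of_apply, Fin.isValue, Matrix.cons_val_two, Matrix.tail_cons]
          rw [hα_def, hβ_def]
          ring
        rw [hdet]
        exact mul_ne_zero hc0 hlin
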